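/- For every polynomial q ∈ ℝ[y₁,…,y_k,X,Y] there exists R₀ > 2 such that for every R ≥ R₀ the following holds. (a) For all A, B ∈ ℝ and every R-growing sequence b = (b₁,…,bₙ) with n ≥ k that is R-well-placed with respect to q, A, B, the sign of q(b_{i₁},…,b_{i_k},A,B) is the same for all index tuples 1 ≤ i₁ < ⋯ < i_k ≤ n. (b) Moreover, this common sign depends only on the type: if (A′,B′) ∈ ℝ² and b′ = (b′₁,…,b′_{n′}) with n′ ≥ k is another R-growing sequence that is R-well-placed with respect to q, A′, B′, if sgn q_α(A,B) = sgn q_α(A′,B′) for every α ∈ Λ(q), and if there exists a function τ : Λ(q)² → {D, G} such that for all α, β ∈ Λ(q): τ(α,β) = D implies that the ratio is dwarfed for both (b,A,B) and (b′,A′,B′), and τ(α,β) = G implies that it is gigantic for both, then the common sign of q on increasing k-tuples of b′ (with parameters A′,B′) equals the common sign for b (with parameters A,B). -/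

import Mathlib

/-- A sequence `b` is `R`-growing if `b₁ ≥ R` and `b_{i+1} ≥ b_i ^ R`
(real exponentiation). -/
def RGrowing (R : ℝ) {n : ℕ} (b : Fin n → ℝ) : Prop :=
  (∀ h : 0 < n, R ≤ b ⟨0, h⟩) ∧
  ∀ i : ℕ, ∀ h : i + 1 < n, b ⟨i, Nat.lt_of_succ_lt h⟩ ^ R ≤ b ⟨i + 1, h⟩

/-- A polynomial `q ∈ ℝ[y₁,…,y_k,X,Y]` is taken as a polynomial in `y₁,…,y_k` whose
coefficients `q_α` are polynomials in the two variables `X, Y`; `coeffVal q α A B` is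
the value `q_α(A,B)`. -/
noncomputable def coeffVal {k : ℕ} (q : MvPolynomial (Fin k) (MvPolynomial (Fin 2) ℝ))
    (α : Fin k →₀ ℕ) (A B : ℝ) : ℝ :=
  MvPolynomial.eval ![A, B] (MvPolynomial.coeff α q)

/-- The value `q(y₁,…,y_k,A,B)` of `q ∈ ℝ[y₁,…,y_k,X,Y]`. -/
noncomputable def evalFull {k : ℕ} (q : MvPolynomial (Fin k) (MvPolynomial (Fin 2) ℝ))
    (y : Fin k → ℝ) (A B : ℝ) : ℝ :=
  MvPolynomial.eval₂ (MvPolynomial.eval ![A, B]) y q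

/-- The ratio `u/v` is dwarfed by the sequence `b`: `R·|u| ≤ b₁·|v|`. -/
def Dwarfed (R : ℝ) {n : ℕ} (b : Fin n → ℝ) (u v : ℝ) : Prop :=
  ∀ h0 : 0 < n, R * |u| ≤ b ⟨0, h0⟩ * |v|

/-- The ratio `u/v` is gigantic for the sequence `b`: `|u| ≥ bₙ^R·|v|`. -/
def Gigantic (R : ℝ) {n : ℕ} (b : Fin n → ℝ) (u v : ℝ) : Prop :=
  ∀ h0 : 0 < n, b ⟨n - 1, Nat.sub_lt h0 Nat.one_pos⟩ ^ R * |v| ≤ |u|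

/-- An `R`-growing sequence `b` is `R`-well-placed w.r.t. `q, A, B` if for all
`α, β ∈ Λ(q)` the ratio `q_α(A,B)/q_β(A,B)` is dwarfed by `b` or gigantic for `b`. -/
def WellPlaced (R : ℝ) {n k : ℕ} (b : Fin n → ℝ)
    (q : MvPolynomial (Fin k) (MvPolynomial (Fin 2) ℝ)) (A B : ℝ) : Prop :=
  ∀ α ∈ q.support, ∀ β ∈ q.support,
    Dwarfed R b (coeffVal q α A B) (coeffVal q β A B) ∨
    Gigantic R b (coeffVal q α A B) (coeffVal q β A B)

section growth
variable {R : ℝ} {n : ℕ} {b : Fin n → ℝ}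

lemma rg_ge (hR : 1 ≤ R) (h : RGrowing R b) (m : Fin n) : R ≤ b m := by
  obtain ⟨v, hv⟩ := m
  induction v with
  | zero => exact h.1 _
  | succ v ih =>
    have hv' : v < n := Nat.lt_of_succ_lt hv
    have h1 : R ≤ b ⟨v, hv'⟩ := ih hv'
    have h2 : b ⟨v, hv'⟩ ^ R ≤ b ⟨v + 1, hv⟩ := h.2 v hv
    have h3 : b ⟨v, hv'⟩ ≤ b ⟨v, hv'⟩ ^ R := by
      nth_rewrite 1 [← Real.rpow_one (b ⟨v, hv'⟩)]
      exact Real.rpow_le_rpow_of_exponent_le (le_trans hR h1) hR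
    linarith

lemma rg_mono (hR : 1 ≤ R) (h : RGrowing R b) {v w : Fin n} (hvw : v ≤ w) : b v ≤ b w := by
  have key : ∀ d v' (h2 : v' + d < n), b ⟨v', by omega⟩ ≤ b ⟨v' + d, h2⟩ := by
    intro d
    induction d with
    | zero => intro v' h2; simp
    | succ d ih =>
      intro v' h2
      have hd : v' + d < n := by omega
      have h1 : b ⟨v', by omega⟩ ≤ b ⟨v' + d, hd⟩ := ih v' hd
      have h2' : b ⟨v' + d, hd⟩ ^ R ≤ b ⟨v' + d + 1, by omega⟩ := h.2 (v' + d) (by omega)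
      have h3 : b ⟨v' + d, hd⟩ ≤ b ⟨v' + d, hd⟩ ^ R := by
        nth_rewrite 1 [← Real.rpow_one (b ⟨v' + d, hd⟩)]
        exact Real.rpow_le_rpow_of_exponent_le (le_trans hR (rg_ge hR h _)) hR
      have he : b ⟨v' + (d + 1), h2⟩ = b ⟨v' + d + 1, by omega⟩ := by congr 1
      rw [he]; linarith
  obtain ⟨d, hd⟩ := Nat.exists_eq_add_of_le (show v.val ≤ w.val from hvw)
  have hww : w = ⟨v.val + d, by omega⟩ := Fin.ext (by simp only [Fin.val_mk]; omega)
  rw [hww]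
  exact key d v.val (by omega)

lemma rg_step (hR : 1 ≤ R) (h : RGrowing R b) {v w : Fin n} (hvw : v.val + 1 ≤ w.val) :
    b v ^ R ≤ b w := by
  have hv1 : v.val + 1 < n := lt_of_le_of_lt hvw w.isLt
  have h1 : b v ^ R ≤ b ⟨v.val + 1, hv1⟩ := by
    have := h.2 v.val hv1
    simpa using this
  exact le_trans h1 (rg_mono hR h (show (⟨v.val + 1, hv1⟩ : Fin n) ≤ w from Fin.le_def.mpr hvw))

end growth

noncomputable def mon {k : ℕ} (y : Fin k → ℝ) (d : Fin k →₀ ℕ) : ℝ := ∏ t, y t ^ d t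

section monlem
variable {k : ℕ} {y : Fin k → ℝ} {d : Fin k →₀ ℕ} {C : ℝ}

lemma one_le_mon (hy : ∀ t, 1 ≤ y t) : 1 ≤ mon y d := by
  rw [mon]
  calc (1:ℝ) = ∏ _t : Fin k, 1 := by simp
  _ ≤ ∏ t, y t ^ d t :=
    Finset.prod_le_prod (fun _ _ => zero_le_one) (fun t _ => one_le_pow₀ (hy t))

lemma mon_pos (hy : ∀ t, 1 ≤ y t) : 0 < mon y d := lt_of_lt_of_le one_pos (one_le_mon hy)

lemma mon_le {D' : ℕ} (hy1 : ∀ t, 1 ≤ y t) (hC : 1 ≤ C) (hyC : ∀ t, y t ≤ C)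
    (hd : ∑ t, d t ≤ D') : mon y d ≤ C ^ D' := by
  have h1 : mon y d ≤ ∏ t, C ^ d t := by
    apply Finset.prod_le_prod (fun t _ => pow_nonneg (by linarith [hy1 t]) _)
      (fun t _ => pow_le_pow_left₀ (by linarith [hy1 t]) (hyC t) _)
  rw [Finset.prod_pow_eq_pow_sum] at h1
  exact le_trans h1 (pow_le_pow_right₀ hC hd)

lemma sum_d_le_totalDegree (q : MvPolynomial (Fin k) (MvPolynomial (Fin 2) ℝ))
    (hd : d ∈ q.support) : ∑ t, d t ≤ q.totalDegree := by
  have h := MvPolynomial.le_totalDegree hd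
  rwa [Finsupp.sum_fintype _ _ (fun _ => rfl)] at h

end monlem

lemma evalFull_eq {k : ℕ} (q : MvPolynomial (Fin k) (MvPolynomial (Fin 2) ℝ))
    (y : Fin k → ℝ) (A B : ℝ) :
    evalFull q y A B = ∑ β ∈ q.support, coeffVal q β A B * mon y β := by
  rw [evalFull, MvPolynomial.eval₂_eq]
  refine Finset.sum_congr rfl fun d _ => ?_
  rw [coeffVal, mon]
  congr 1
  exact Finset.prod_subset (Finset.subset_univ _) fun t _ ht => by
    rw [Finsupp.notMem_support_iff.mp ht, pow_zero]

lemma rlt_total {k : ℕ} {α β : Fin k →₀ ℕ} (h : α ≠ β) :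
    (∃ j, α j < β j ∧ ∀ t, j < t → α t = β t) ∨
    (∃ j, β j < α j ∧ ∀ t, j < t → α t = β t) := by
  classical
  set s : Finset (Fin k) := Finset.univ.filter (fun t => α t ≠ β t) with hs
  have hne : s.Nonempty := by
    by_contra hc
    rw [Finset.not_nonempty_iff_eq_empty] at hc
    apply h
    ext t
    by_contra ht
    have : t ∈ s := by simp [hs, ht]
    simp [hc] at this
  set j := s.max' hne with hj
  have hjs : j ∈ s := s.max'_mem hne
  have hjne : α j ≠ β j := by simpa [hs] using hjs
  have heq : ∀ t, j < t → α t = β t := by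
    intro t ht
    by_contra hc
    have : t ∈ s := by simp [hs, hc]
    exact absurd (s.le_max' t this) (not_le.mpr ht)
  rcases lt_or_gt_of_ne hjne with h1 | h1
  · exact Or.inl ⟨j, h1, heq⟩
  · exact Or.inr ⟨j, h1, heq⟩

lemma sign_eq_sign_of_dominant {s c m : ℝ} (hm : 0 < m) (h : |s - c * m| < |c| * m) :
    Real.sign s = Real.sign c := by
  rcases lt_trichotomy c 0 with hc | hc | hc
  · rw [abs_of_neg hc] at h
    have hs : s < 0 := by
      have := abs_lt.mp h
      nlinarith
    rw [Real.sign_of_neg hs, Real.sign_of_neg hc]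
  · subst hc
    simp only [zero_mul, abs_zero, sub_zero] at h
    exact absurd h (not_lt.mpr (abs_nonneg _))
  · rw [abs_of_pos hc] at h
    have hs : 0 < s := by
      have := abs_lt.mp h
      nlinarith
    rw [Real.sign_of_pos hs, Real.sign_of_pos hc]

section split
variable {k : ℕ} (y : Fin k → ℝ) (d : Fin k →₀ ℕ) (j : Fin k)

lemma mon_split :
    mon y d = (∏ t ∈ Finset.univ.filter (· < j), y t ^ d t) * y j ^ d j *
      (∏ t ∈ Finset.univ.filter (j < ·), y t ^ d t) := by
  classical
  have h1 : (∏ t ∈ Finset.univ.filter (· < j), y t ^ d t) *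
      (∏ t ∈ Finset.univ.filter (fun t => ¬ t < j), y t ^ d t) = mon y d :=
    Finset.prod_filter_mul_prod_filter_not _ _ _
  have h2 : Finset.univ.filter (fun t => ¬ t < j) =
      insert j (Finset.univ.filter (j < ·)) := by
    ext t
    simp only [Finset.mem_filter, Finset.mem_univ, true_and, Finset.mem_insert, not_lt]
    constructor
    · intro ht
      rcases eq_or_lt_of_le ht with h | h
      · exact Or.inl h.symm
      · exact Or.inr h
    · rintro (rfl | ht)
      · exact le_refl _
      · exact le_of_lt ht
  have h3 : j ∉ Finset.univ.filter (j < ·) := by simp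
  rw [h2, Finset.prod_insert h3] at h1
  rw [← h1]; ring

lemma mon_mul_le {n : ℕ} {R : ℝ} {b : Fin n → ℝ} (hg : RGrowing R b) (hR : 1 ≤ R)
    {D' : ℕ} (hDR : (D' : ℝ) + 1 ≤ R)
    {β α : Fin k →₀ ℕ} (hsum : ∑ t, β t ≤ D')
    {i : Fin k → Fin n} (hi : StrictMono i) (hn0 : 0 < n)
    (hj : β j < α j) (heq : ∀ t, j < t → β t = α t) :
    mon (fun t => b (i t)) β * b ⟨0, hn0⟩ ≤ mon (fun t => b (i t)) α := by
  classical
  set y : Fin k → ℝ := fun t => b (i t) with hy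
  have hR0 : (1:ℝ) ≤ R := hR
  have hy1 : ∀ t, 1 ≤ y t := fun t => le_trans hR (rg_ge hR hg (i t))
  have hb0pos : (0:ℝ) ≤ b ⟨0, hn0⟩ := le_trans zero_le_one (le_trans hR (rg_ge hR hg _))
  have hb0le : ∀ t, b ⟨0, hn0⟩ ≤ y t := fun t => rg_mono hR hg (by simp [Fin.le_def])
  have hmono : ∀ {t t' : Fin k}, t ≤ t' → y t ≤ y t' :=
    fun h => rg_mono hR hg (hi.monotone h)
  rw [mon_split y β j, mon_split y α j]
  have hT : (∏ t ∈ Finset.univ.filter (j < ·), y t ^ β t) =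
      ∏ t ∈ Finset.univ.filter (j < ·), y t ^ α t :=
    Finset.prod_congr rfl (fun t ht => by rw [heq t (by simpa using ht)])
  rw [hT]
  set P := ∏ t ∈ Finset.univ.filter (· < j), y t ^ β t with hP
  set Pa := ∏ t ∈ Finset.univ.filter (· < j), y t ^ α t with hPa
  set T := ∏ t ∈ Finset.univ.filter (j < ·), y t ^ α t with hTdef
  have hynn : ∀ t, (0:ℝ) ≤ y t := fun t => le_trans zero_le_one (hy1 t)
  have hT1 : (1:ℝ) ≤ T := by
    rw [hTdef]
    calc (1:ℝ) = ∏ _t ∈ Finset.univ.filter (j < ·), 1 := by simp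
    _ ≤ _ := Finset.prod_le_prod (fun _ _ => zero_le_one) (fun t _ => one_le_pow₀ (hy1 t))
  have hPa1 : (1:ℝ) ≤ Pa := by
    rw [hPa]
    calc (1:ℝ) = ∏ _t ∈ Finset.univ.filter (· < j), 1 := by simp
    _ ≤ _ := Finset.prod_le_prod (fun _ _ => zero_le_one) (fun t _ => one_le_pow₀ (hy1 t))
  have hPnn : (0:ℝ) ≤ P := by
    rw [hP]; exact Finset.prod_nonneg (fun t _ => pow_nonneg (hynn t) _)
  have key1 : P * b ⟨0, hn0⟩ ≤ y j := by
    rcases Nat.eq_zero_or_pos j.val with hj0 | hj0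
    · have hempty : Finset.univ.filter (· < j) = ∅ := by
        apply Finset.filter_eq_empty_iff.mpr
        intro t _
        simp only [Fin.lt_def, hj0]
        omega
      have hP1 : P = 1 := by rw [hP, hempty, Finset.prod_empty]
      rw [hP1, one_mul]
      exact hb0le j
    · have hj'lt : j.val - 1 < k := by have := j.isLt; omega
      set j' : Fin k := ⟨j.val - 1, hj'lt⟩ with hj'
      have hj'j : j' < j := by simp only [Fin.lt_def, hj']; omega
      have hstep : y j' ^ R ≤ y j := by
        apply rg_step hR hg
        have : i j' < i j := hi hj'j
        omega
      have hPle : P ≤ y j' ^ (D' : ℕ) := by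
        have h1 : P ≤ ∏ t ∈ Finset.univ.filter (· < j), y j' ^ β t := by
          rw [hP]
          refine Finset.prod_le_prod (fun t _ => pow_nonneg (hynn t) _) (fun t ht => ?_)
          refine pow_le_pow_left₀ (hynn t) (hmono ?_) _
          have : t < j := by simpa using ht
          simp only [Fin.le_def, hj']
          simp only [Fin.lt_def] at this
          omega
        rw [Finset.prod_pow_eq_pow_sum] at h1
        refine le_trans h1 (pow_le_pow_right₀ (hy1 j') ?_)
        exact le_trans (Finset.sum_le_sum_of_subset (Finset.subset_univ _)) hsum
      have hfin : y j' ^ (D' : ℕ) * b ⟨0, hn0⟩ ≤ y j' ^ R := by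
        have h2 : y j' ^ (D' : ℕ) * y j' = y j' ^ (D' + 1 : ℕ) := (pow_succ _ _).symm
        have h4 : y j' ^ (D' + 1 : ℕ) = y j' ^ ((D' : ℝ) + 1) := by
          rw [← Real.rpow_natCast]
          norm_num
        have h3 : y j' ^ ((D' : ℝ) + 1) ≤ y j' ^ R :=
          Real.rpow_le_rpow_of_exponent_le (hy1 j') hDR
        have h5 : y j' ^ (D' : ℕ) * b ⟨0, hn0⟩ ≤ y j' ^ (D' : ℕ) * y j' :=
          mul_le_mul_of_nonneg_left (hb0le j') (pow_nonneg (hynn j') _)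
        rw [h2, h4] at h5
        linarith
      calc P * b ⟨0, hn0⟩ ≤ y j' ^ (D' : ℕ) * b ⟨0, hn0⟩ :=
            mul_le_mul_of_nonneg_right hPle hb0pos
      _ ≤ y j' ^ R := hfin
      _ ≤ y j := hstep
  have key2 : y j ^ β j * y j ≤ y j ^ α j := by
    rw [← pow_succ]
    exact pow_le_pow_right₀ (hy1 j) hj
  have hTnn : (0:ℝ) ≤ T := le_trans zero_le_one hT1
  have hyb : (0:ℝ) ≤ y j ^ β j * T := mul_nonneg (pow_nonneg (hynn j) _) hTnn
  calc P * y j ^ β j * T * b ⟨0, hn0⟩ = (P * b ⟨0, hn0⟩) * (y j ^ β j * T) := by ring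
  _ ≤ y j * (y j ^ β j * T) := mul_le_mul_of_nonneg_right key1 hyb
  _ = (y j ^ β j * y j) * T := by ring
  _ ≤ y j ^ α j * T := mul_le_mul_of_nonneg_right key2 hTnn
  _ ≤ Pa * (y j ^ α j * T) :=
      le_mul_of_one_le_left (mul_nonneg (pow_nonneg (hynn j) _) hTnn) hPa1
  _ = Pa * y j ^ α j * T := by ring

end split

lemma main_key {k n : ℕ} {R : ℝ} (q : MvPolynomial (Fin k) (MvPolynomial (Fin 2) ℝ))
    (A B : ℝ) (hR2 : 2 < R)
    (hDR : (q.totalDegree : ℝ) + 2 ≤ R) (hMR : (q.support.card : ℝ) < R)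
    {b : Fin n → ℝ} (hg : RGrowing R b) (hn0 : 0 < n)
    {astar : Fin k →₀ ℕ} (hmem : astar ∈ q.support)
    (hne : coeffVal q astar A B ≠ 0)
    (hdom : ∀ β ∈ q.support, β ≠ astar →
      coeffVal q β A B = 0 ∨
      b ⟨n - 1, Nat.sub_lt hn0 Nat.one_pos⟩ ^ R * |coeffVal q β A B| ≤ |coeffVal q astar A B| ∨
      (R * |coeffVal q β A B| ≤ b ⟨0, hn0⟩ * |coeffVal q astar A B| ∧
        ∃ j : Fin k, β j < astar j ∧ ∀ t, j < t → β t = astar t))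
    {i : Fin k → Fin n} (hi : StrictMono i) :
    Real.sign (evalFull q (fun t => b (i t)) A B) = Real.sign (coeffVal q astar A B) := by
  classical
  set y : Fin k → ℝ := fun t => b (i t) with hy
  have hR1 : (1:ℝ) ≤ R := by linarith
  have hR0 : (0:ℝ) < R := by linarith
  have hy1 : ∀ t, 1 ≤ y t := fun t => le_trans hR1 (rg_ge hR1 hg (i t))
  set L := b ⟨n - 1, Nat.sub_lt hn0 Nat.one_pos⟩ with hL
  have hL1 : (1:ℝ) ≤ L := le_trans hR1 (rg_ge hR1 hg _)
  have hL0 : (0:ℝ) ≤ L := le_trans zero_le_one hL1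
  have hLR : R ≤ L := rg_ge hR1 hg _
  have hyL : ∀ t, y t ≤ L := fun t => by
    apply rg_mono hR1 hg
    simp only [Fin.le_def]
    have := (i t).isLt
    omega
  set D' := q.totalDegree with hD'
  set c := fun β => coeffVal q β A B with hc
  set T := |c astar| * mon y astar with hT
  have hmonpos : ∀ d : Fin k →₀ ℕ, 0 < mon y d := fun d => mon_pos hy1
  have hTpos : 0 < T := mul_pos (abs_pos.mpr hne) (hmonpos _)
  have hperterm : ∀ β ∈ q.support.erase astar, |c β * mon y β| ≤ T / R := by
    intro β hβ
    obtain ⟨hβne, hβmem⟩ := Finset.mem_erase.mp hβ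
    rw [abs_mul, abs_of_pos (hmonpos β), le_div_iff₀ hR0]
    rcases hdom β hβmem hβne with h0 | hbig | ⟨hdw, j, hj, heq⟩
    · have hcb : c β = 0 := h0
      rw [hcb, abs_zero, zero_mul, zero_mul]
      exact le_of_lt hTpos
    · have hbig' : L ^ R * |c β| ≤ |c astar| := hbig
      have hmle : mon y β ≤ L ^ D' := mon_le hy1 hL1 hyL (sum_d_le_totalDegree q hβmem)
      have hcnn : (0:ℝ) ≤ |c β| := abs_nonneg _
      have hLD : (0:ℝ) ≤ L ^ D' := pow_nonneg hL0 _
      have h1 : |c β| * mon y β * R ≤ |c β| * L ^ D' * R :=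
        mul_le_mul_of_nonneg_right (mul_le_mul_of_nonneg_left hmle hcnn) (le_of_lt hR0)
      have hRL2 : R ≤ L ^ 2 := by nlinarith
      have h2 : |c β| * L ^ D' * R ≤ |c β| * L ^ (D' + 2) := by
        have he : L ^ (D' + 2) = L ^ D' * L ^ 2 := by ring
        rw [he, ← mul_assoc]
        exact mul_le_mul_of_nonneg_left hRL2 (mul_nonneg hcnn hLD)
      have h3 : L ^ (D' + 2) ≤ L ^ R := by
        rw [← Real.rpow_natCast L (D' + 2)]
        apply Real.rpow_le_rpow_of_exponent_le hL1
        push_cast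
        linarith
      have h4 : |c β| * L ^ (D' + 2) ≤ |c β| * L ^ R := mul_le_mul_of_nonneg_left h3 hcnn
      have h5 : |c β| * L ^ R ≤ |c astar| := by rw [mul_comm]; exact hbig'
      have h6 : |c astar| ≤ T := by
        rw [hT]
        exact le_mul_of_one_le_right (abs_nonneg _) (one_le_mon hy1)
      linarith
    · have hdw' : R * |c β| ≤ b ⟨0, hn0⟩ * |c astar| := hdw
      have hm := mon_mul_le (j := j) hg hR1
        (show (D' : ℝ) + 1 ≤ R by linarith) (sum_d_le_totalDegree q hβmem) hi hn0 hj heq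
      have hmnn : (0:ℝ) ≤ mon y β := le_of_lt (hmonpos β)
      calc |c β| * mon y β * R = (R * |c β|) * mon y β := by ring
      _ ≤ (b ⟨0, hn0⟩ * |c astar|) * mon y β := mul_le_mul_of_nonneg_right hdw' hmnn
      _ = |c astar| * (mon y β * b ⟨0, hn0⟩) := by ring
      _ ≤ |c astar| * mon y astar := mul_le_mul_of_nonneg_left hm (abs_nonneg _)
      _ = T := hT.symm
  have hcard : ((q.support.erase astar).card : ℝ) < R := by
    refine lt_of_le_of_lt ?_ hMR
    exact_mod_cast Nat.cast_le.mpr (Finset.card_le_card (Finset.erase_subset _ _))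
  have hsum : |evalFull q y A B - c astar * mon y astar| < T := by
    rw [evalFull_eq, ← Finset.sum_erase_add _ _ hmem, add_sub_cancel_right]
    calc |∑ β ∈ q.support.erase astar, c β * mon y β|
        ≤ ∑ β ∈ q.support.erase astar, |c β * mon y β| := Finset.abs_sum_le_sum_abs _ _
    _ ≤ ∑ _β ∈ q.support.erase astar, T / R := Finset.sum_le_sum hperterm
    _ = ((q.support.erase astar).card : ℝ) * (T / R) := by
        rw [Finset.sum_const, nsmul_eq_mul]
    _ < R * (T / R) := mul_lt_mul_of_pos_right hcard (div_pos hTpos hR0)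
    _ = T := mul_div_cancel₀ T (ne_of_gt hR0)
  exact sign_eq_sign_of_dominant (hmonpos astar) hsum

lemma not_both {R : ℝ} {n : ℕ} (hR2 : 2 < R) {b : Fin n → ℝ} (hg : RGrowing R b)
    (hn0 : 0 < n) {u v : ℝ} (hv : v ≠ 0)
    (h1 : R * |u| ≤ b ⟨0, hn0⟩ * |v|)
    (h2 : b ⟨n - 1, Nat.sub_lt hn0 Nat.one_pos⟩ ^ R * |v| ≤ |u|) : False := by
  have hR1 : (1:ℝ) ≤ R := by linarith
  set L := b ⟨n - 1, Nat.sub_lt hn0 Nat.one_pos⟩ with hL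
  have hLR : R ≤ L := rg_ge hR1 hg _
  have hb0L : b ⟨0, hn0⟩ ≤ L := by
    apply rg_mono hR1 hg
    simp [Fin.le_def]
  have hLrp : L ≤ L ^ R := by
    nth_rewrite 1 [← Real.rpow_one L]
    exact Real.rpow_le_rpow_of_exponent_le (by linarith) hR1
  have hvpos : 0 < |v| := abs_pos.mpr hv
  have hunn : 0 ≤ |u| := abs_nonneg _
  have c1 : b ⟨0, hn0⟩ * |v| ≤ L * |v| := mul_le_mul_of_nonneg_right hb0L (le_of_lt hvpos)
  have c2 : L * |v| ≤ L ^ R * |v| := mul_le_mul_of_nonneg_right hLrp (le_of_lt hvpos)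
  have c3 : 0 < L * |v| := mul_pos (by linarith) hvpos
  nlinarith

lemma select {k n : ℕ} {R : ℝ} (q : MvPolynomial (Fin k) (MvPolynomial (Fin 2) ℝ))
    (A B : ℝ) (hR2 : 2 < R) (hDR : (q.totalDegree : ℝ) + 2 ≤ R)
    {b : Fin n → ℝ} (hg : RGrowing R b) (hn0 : 0 < n) (hkn : k ≤ n)
    (hwp : WellPlaced R b q A B) :
    (∀ β ∈ q.support, coeffVal q β A B = 0) ∨
    ∃ astar ∈ q.support, coeffVal q astar A B ≠ 0 ∧
      ∀ β ∈ q.support, β ≠ astar →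
        coeffVal q β A B = 0 ∨
        b ⟨n - 1, Nat.sub_lt hn0 Nat.one_pos⟩ ^ R * |coeffVal q β A B| ≤
          |coeffVal q astar A B| ∨
        (R * |coeffVal q β A B| ≤ b ⟨0, hn0⟩ * |coeffVal q astar A B| ∧
          ∃ j : Fin k, β j < astar j ∧ ∀ t, j < t → β t = astar t) := by
  classical
  set Λ : Finset (Fin k →₀ ℕ) := q.support.filter (fun β => coeffVal q β A B ≠ 0) with hΛ
  rcases Λ.eq_empty_or_nonempty with he | hne
  · left
    intro β hβ
    by_contra hc
    have hmem : β ∈ Λ := Finset.mem_filter.mpr ⟨hβ, hc⟩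
    rw [he] at hmem
    simp at hmem
  · right
    have hR1 : (1:ℝ) ≤ R := by linarith
    have hR0 : (0:ℝ) < R := by linarith
    set itop : Fin k → Fin n := fun j => ⟨j.val, lt_of_lt_of_le j.isLt hkn⟩ with hitopdef
    have hitop : StrictMono itop := fun a b h => by
      simp only [hitopdef, Fin.lt_def]
      exact h
    set y : Fin k → ℝ := fun t => b (itop t) with hy
    have hy1 : ∀ t, 1 ≤ y t := fun t => le_trans hR1 (rg_ge hR1 hg (itop t))
    set L := b ⟨n - 1, Nat.sub_lt hn0 Nat.one_pos⟩ with hL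
    have hL1 : (1:ℝ) ≤ L := le_trans hR1 (rg_ge hR1 hg _)
    have hLR : R ≤ L := rg_ge hR1 hg _
    have hL0 : (0:ℝ) ≤ L := by linarith
    have hyL : ∀ t, y t ≤ L := fun t => by
      apply rg_mono hR1 hg
      simp only [Fin.le_def]
      have := (itop t).isLt
      omega
    have hb0R : R ≤ b ⟨0, hn0⟩ := rg_ge hR1 hg _
    have hb0pos : (0:ℝ) < b ⟨0, hn0⟩ := by linarith
    set key : (Fin k →₀ ℕ) → ℝ := fun β => |coeffVal q β A B| * mon y β with hkeydef
    obtain ⟨astar, hastar, hmax⟩ := Λ.exists_max_image key hne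
    have hamem : astar ∈ q.support := (Finset.mem_filter.mp hastar).1
    have hane : coeffVal q astar A B ≠ 0 := (Finset.mem_filter.mp hastar).2
    have hkapos : 0 < key astar := mul_pos (abs_pos.mpr hane) (mon_pos hy1)
    refine ⟨astar, hamem, hane, ?_⟩
    intro β hβmem hβne
    by_cases hcb : coeffVal q β A B = 0
    · exact Or.inl hcb
    have hβΛ : β ∈ Λ := Finset.mem_filter.mpr ⟨hβmem, hcb⟩
    have hkey : key β ≤ key astar := hmax β hβΛ
    rcases hwp astar hamem β hβmem with hd1 | hg1
    · rcases hwp β hβmem astar hamem with hd2 | hg2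
      · right; right
        refine ⟨hd2 hn0, ?_⟩
        rcases rlt_total hβne with hok | hbad
        · exact hok
        · exfalso
          obtain ⟨j, hj, heq⟩ := hbad
          have hm := mon_mul_le (j := j) hg hR1
            (show ((q.totalDegree : ℕ) : ℝ) + 1 ≤ R by push_cast; linarith)
            (sum_d_le_totalDegree q hamem) hitop hn0 hj (fun t ht => (heq t ht).symm)
          -- hm : mon y astar * b0 ≤ mon y β
          have hd1' := hd1 hn0
          -- hd1' : R * |c astar| ≤ b0 * |c β|
          have hmna : (0:ℝ) ≤ mon y astar * b ⟨0, hn0⟩ :=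
            mul_nonneg (le_of_lt (mon_pos hy1)) (le_of_lt hb0pos)
          have s1 : (R * |coeffVal q astar A B|) * (mon y astar * b ⟨0, hn0⟩) ≤
              (b ⟨0, hn0⟩ * |coeffVal q β A B|) * (mon y astar * b ⟨0, hn0⟩) :=
            mul_le_mul_of_nonneg_right hd1' hmna
          have s2 : (b ⟨0, hn0⟩ * |coeffVal q β A B|) * (mon y astar * b ⟨0, hn0⟩) ≤
              (b ⟨0, hn0⟩ * |coeffVal q β A B|) * mon y β := by
            apply mul_le_mul_of_nonneg_left hm
            exact mul_nonneg (le_of_lt hb0pos) (abs_nonneg _)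
          have s3 : R * key astar * b ⟨0, hn0⟩ * b ⟨0, hn0⟩ ≤
              b ⟨0, hn0⟩ * key β * b ⟨0, hn0⟩ := by
            have e1 : (R * |coeffVal q astar A B|) * (mon y astar * b ⟨0, hn0⟩) =
                R * key astar * b ⟨0, hn0⟩ := by rw [hkeydef]; ring
            have e2 : (b ⟨0, hn0⟩ * |coeffVal q β A B|) * mon y β =
                b ⟨0, hn0⟩ * key β := by rw [hkeydef]; ring
            nlinarith [le_trans s1 s2]
          have s4 : key β ≤ key astar := hkey
          nlinarith [s3, mul_le_mul_of_nonneg_right s4 (le_of_lt (mul_pos hb0pos hb0pos)),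
            mul_pos hkapos (mul_pos hb0pos hb0pos)]
      · exfalso
        have hg2' := hg2 hn0
        -- hg2' : L ^ R * |c astar| ≤ |c β|
        have hmlea : mon y astar ≤ L ^ q.totalDegree :=
          mon_le hy1 hL1 hyL (sum_d_le_totalDegree q hamem)
        have h3 : L ^ (q.totalDegree + 2) ≤ L ^ R := by
          rw [← Real.rpow_natCast L (q.totalDegree + 2)]
          apply Real.rpow_le_rpow_of_exponent_le hL1
          push_cast
          linarith
        have hca : 0 < |coeffVal q astar A B| := abs_pos.mpr hane
        have hX : 0 < L ^ q.totalDegree * |coeffVal q astar A B| :=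
          mul_pos (pow_pos (by linarith) _) hca
        have c1 : key astar ≤ L ^ q.totalDegree * |coeffVal q astar A B| := by
          have hmm : |coeffVal q astar A B| * mon y astar ≤
              |coeffVal q astar A B| * L ^ q.totalDegree :=
            mul_le_mul_of_nonneg_left hmlea (abs_nonneg _)
          calc key astar = |coeffVal q astar A B| * mon y astar := rfl
          _ ≤ |coeffVal q astar A B| * L ^ q.totalDegree := hmm
          _ = L ^ q.totalDegree * |coeffVal q astar A B| := mul_comm _ _
        have c2 : |coeffVal q β A B| ≤ key β :=
          le_mul_of_one_le_right (abs_nonneg _) (one_le_mon hy1)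
        have c3 : L ^ 2 * (L ^ q.totalDegree * |coeffVal q astar A B|) ≤
            L ^ R * |coeffVal q astar A B| := by
          have he : L ^ 2 * L ^ q.totalDegree = L ^ (q.totalDegree + 2) := by ring
          nlinarith [mul_le_mul_of_nonneg_right h3 (le_of_lt hca)]
        have hL2 : (1:ℝ) < L ^ 2 := by nlinarith
        have hchain : L ^ 2 * (L ^ q.totalDegree * |coeffVal q astar A B|) ≤
            L ^ q.totalDegree * |coeffVal q astar A B| := by linarith
        nlinarith [hL2, hX]
    · right; left
      exact hg1 hn0


/-- for every `q ∈ ℝ[y₁,…,y_k,X,Y]` there is `R₀ > 2` such that for all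
`R ≥ R₀`: (a) the sign of `q(b_{i₁},…,b_{i_k},A,B)` is the same for all increasing
`k`-tuples of any `R`-growing sequence `b` that is `R`-well-placed w.r.t. `q, A, B`;
(b) this common sign depends only on the type, i.e., it agrees for two such data
`(b,A,B)` and `(b′,A′,B′)` whenever the coefficient signs agree and a common
dwarfed/gigantic pattern `τ` exists. -/
theorem stmt9 {k : ℕ} (q : MvPolynomial (Fin k) (MvPolynomial (Fin 2) ℝ)) :
    ∃ R₀ : ℝ, 2 < R₀ ∧ ∀ R : ℝ, R₀ ≤ R →
      (∀ A B : ℝ, ∀ n : ℕ, k ≤ n → ∀ b : Fin n → ℝ,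
        RGrowing R b → WellPlaced R b q A B →
        ∀ i i' : Fin k → Fin n, StrictMono i → StrictMono i' →
          Real.sign (evalFull q (fun j => b (i j)) A B) =
            Real.sign (evalFull q (fun j => b (i' j)) A B)) ∧
      (∀ A B A' B' : ℝ, ∀ n n' : ℕ, k ≤ n → k ≤ n' →
        ∀ b : Fin n → ℝ, ∀ b' : Fin n' → ℝ,
        RGrowing R b → RGrowing R b' →
        WellPlaced R b q A B → WellPlaced R b' q A' B' →
        (∀ α ∈ q.support,
          Real.sign (coeffVal q α A B) = Real.sign (coeffVal q α A' B')) →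
        (∃ τ : (Fin k →₀ ℕ) → (Fin k →₀ ℕ) → Bool,
          ∀ α ∈ q.support, ∀ β ∈ q.support,
            (τ α β = true →
              Dwarfed R b (coeffVal q α A B) (coeffVal q β A B) ∧
              Dwarfed R b' (coeffVal q α A' B') (coeffVal q β A' B')) ∧
            (τ α β = false →
              Gigantic R b (coeffVal q α A B) (coeffVal q β A B) ∧
              Gigantic R b' (coeffVal q α A' B') (coeffVal q β A' B'))) →
        ∀ i : Fin k → Fin n, StrictMono i → ∀ i' : Fin k → Fin n', StrictMono i' →
          Real.sign (evalFull q (fun j => b (i j)) A B) =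
            Real.sign (evalFull q (fun j => b' (i' j)) A' B')) := by
  classical
  refine ⟨(q.totalDegree : ℝ) + (q.support.card : ℝ) + 3, ?_, ?_⟩
  · have h1 : (0:ℝ) ≤ (q.totalDegree : ℝ) := Nat.cast_nonneg _
    have h2 : (0:ℝ) ≤ (q.support.card : ℝ) := Nat.cast_nonneg _
    linarith
  intro R hR
  have hDn : (0:ℝ) ≤ (q.totalDegree : ℝ) := Nat.cast_nonneg _
  have hMn : (0:ℝ) ≤ (q.support.card : ℝ) := Nat.cast_nonneg _
  have hR2 : (2:ℝ) < R := by linarith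
  have hDR : (q.totalDegree : ℝ) + 2 ≤ R := by linarith
  have hMR : (q.support.card : ℝ) < R := by linarith
  rcases Nat.eq_zero_or_pos k with hk0 | hkpos
  · subst hk0
    haveI hsub : Subsingleton (Fin 0 →₀ ℕ) := ⟨fun a b => Finsupp.ext fun t => t.elim0⟩
    have hev : ∀ (y : Fin 0 → ℝ) (A B : ℝ),
        evalFull q y A B = ∑ β ∈ q.support, coeffVal q β A B := by
      intro y A B
      rw [evalFull_eq]
      refine Finset.sum_congr rfl fun d _ => ?_
      have hm1 : mon y d = 1 := by rw [mon]; simp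
      rw [hm1, mul_one]
    constructor
    · intro A B n hn b hgb hwp i i' hi hi'
      rw [hev, hev]
    · intro A B A' B' n n' hn hn' b b' hgb hgb' hwp hwp' hsgn htau i hi i' hi'
      rw [hev, hev]
      rcases q.support.eq_empty_or_nonempty with he | ⟨a, ha⟩
      · rw [he]
        simp
      · have hs : q.support = {a} :=
          Finset.eq_singleton_iff_unique_mem.mpr ⟨ha, fun x _ => Subsingleton.elim x a⟩
        rw [hs, Finset.sum_singleton, Finset.sum_singleton]
        exact hsgn a ha
  · constructor
    · intro A B n hn b hgb hwp i i' hi hi'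
      have hn0 : 0 < n := lt_of_lt_of_le hkpos hn
      rcases select q A B hR2 hDR hgb hn0 hn hwp with hzero | ⟨astar, hamem, hane, hdom⟩
      · have hz : ∀ (ii : Fin k → Fin n), evalFull q (fun j => b (ii j)) A B = 0 := by
          intro ii
          rw [evalFull_eq]
          exact Finset.sum_eq_zero fun β hβ => by rw [hzero β hβ, zero_mul]
        rw [hz i, hz i']
      · rw [main_key q A B hR2 hDR hMR hgb hn0 hamem hane hdom hi,
            main_key q A B hR2 hDR hMR hgb hn0 hamem hane hdom hi']
    · intro A B A' B' n n' hn hn' b b' hgb hgb' hwp hwp' hsgn htau i hi i' hi'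
      obtain ⟨τ, hτ⟩ := htau
      have hn0 : 0 < n := lt_of_lt_of_le hkpos hn
      have hn0' : 0 < n' := lt_of_lt_of_le hkpos hn'
      have hzz : ∀ β ∈ q.support, coeffVal q β A B = 0 → coeffVal q β A' B' = 0 := by
        intro β hβ h0
        have hh := hsgn β hβ
        rw [h0, Real.sign_zero] at hh
        exact Real.sign_eq_zero_iff.mp hh.symm
      rcases select q A B hR2 hDR hgb hn0 hn hwp with hzero | ⟨astar, hamem, hane, hdom⟩
      · have hz1 : evalFull q (fun j => b (i j)) A B = 0 := by
          rw [evalFull_eq]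
          exact Finset.sum_eq_zero fun β hβ => by rw [hzero β hβ, zero_mul]
        have hz2 : evalFull q (fun j => b' (i' j)) A' B' = 0 := by
          rw [evalFull_eq]
          exact Finset.sum_eq_zero fun β hβ => by rw [hzz β hβ (hzero β hβ), zero_mul]
        rw [hz1, hz2]
      · have hane' : coeffVal q astar A' B' ≠ 0 := by
          intro h0
          apply hane
          have hh := hsgn astar hamem
          rw [h0, Real.sign_zero] at hh
          exact Real.sign_eq_zero_iff.mp hh
        have hdom' : ∀ β ∈ q.support, β ≠ astar →
            coeffVal q β A' B' = 0 ∨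
            b' ⟨n' - 1, Nat.sub_lt hn0' Nat.one_pos⟩ ^ R * |coeffVal q β A' B'| ≤
              |coeffVal q astar A' B'| ∨
            (R * |coeffVal q β A' B'| ≤ b' ⟨0, hn0'⟩ * |coeffVal q astar A' B'| ∧
              ∃ j : Fin k, β j < astar j ∧ ∀ t, j < t → β t = astar t) := by
          intro β hβmem hβne
          by_cases hcb : coeffVal q β A B = 0
          · exact Or.inl (hzz β hβmem hcb)
          rcases hdom β hβmem hβne with h0 | hbig | ⟨hdw, j, hj, heq⟩
          · exact absurd h0 hcb
          · right; left
            rcases Bool.eq_false_or_eq_true (τ astar β) with hb | hb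
            · exfalso
              have hdw1 := ((hτ astar hamem β hβmem).1 hb).1 hn0
              exact not_both hR2 hgb hn0 hcb hdw1 hbig
            · exact ((hτ astar hamem β hβmem).2 hb).2 hn0'
          · right; right
            refine ⟨?_, j, hj, heq⟩
            rcases Bool.eq_false_or_eq_true (τ β astar) with hb | hb
            · exact ((hτ β hβmem astar hamem).1 hb).2 hn0'
            · exfalso
              have hgig1 := ((hτ β hβmem astar hamem).2 hb).1 hn0
              exact not_both hR2 hgb hn0 hane hdw hgig1
        rw [main_key q A B hR2 hDR hMR hgb hn0 hamem hane hdom hi,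
            main_key q A' B' hR2 hDR hMR hgb' hn0' hamem hane' hdom' hi']
        exact hsgn astar hamem
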